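/- For all integers r ≥ 2 and positive integers k_1,...,k_r, t_1,...,t_r with k_i ≥ t_i + 1 ≥ 2 for all i, the Ramsey number R([k_1,t_1],...,[k_r,t_r]) satisfies R([k_1,t_1],...,[k_r,t_r]) ≤ Σ_{i=1}^r R([k_1,t_1],...,[k_i − 1, t_i],...,[k_r,t_r]) − (r − 2). -/

import Mathlib

open Finset

/-- A monochromatic copy of `K_{[k,t]}` (complete graph on `k` vertices minus the
edges of a clique of order `t`) in color `i`, inside an `r`-edge-coloring `C` of `K_N`. -/
def HasMonoDropped {N r : ℕ} (C : Fin N → Fin N → Fin r) (i : Fin r) (k t : ℕ) : Prop :=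
  ∃ S T : Finset (Fin N), T ⊆ S ∧ S.card = k ∧ T.card = t ∧
    ∀ u ∈ S, ∀ v ∈ S, u ≠ v → ¬(u ∈ T ∧ v ∈ T) → C u v = i

/-- `R([k 0, t 0], …, [k (r-1), t (r-1)])`: the smallest `n` such that every
`r`-edge-coloring of `K_n` contains a monochromatic `K_{[k i, t i]}` in color `i`
for some `i`. -/
noncomputable def RamseyDropped (r : ℕ) (k t : Fin r → ℕ) : ℕ :=
  sInf {n | ∀ C : Fin n → Fin n → Fin r, (∀ u v, C u v = C v u) →
    ∃ i : Fin r, HasMonoDropped C i (k i) (t i)}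

/-- The coloring `C` of `K_N` contains a `k`-clique whose induced coloring is a
`χ_r`-coloring: there are a labeling `e` of `k` vertices and `φ` such that the edge
`{e i, e j}` with `i < j` has color `φ i`. -/
def HasChiClique {N r : ℕ} (k : ℕ) (C : Fin N → Fin N → Fin r) : Prop :=
  ∃ e : Fin k → Fin N, Function.Injective e ∧
    ∃ φ : Fin k → Fin r, ∀ i j : Fin k, i < j → C (e i) (e j) = φ i

/-- `n` is large enough for `χ_r(k)`: every `r`-edge-coloring of `K_N`, `N ≥ n`,
contains a `k`-clique whose induced coloring is a `χ_r`-coloring. -/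
def ChiProp (r k n : ℕ) : Prop :=
  ∀ N, n ≤ N → ∀ C : Fin N → Fin N → Fin r, (∀ u v, C u v = C v u) → HasChiClique k C

/-- `χ_r(k)`, the smallest `n` satisfying `ChiProp r k n`. -/
noncomputable def chiNum (r k : ℕ) : ℕ := sInf {n | ChiProp r k n}

lemma mono_map {N M r : ℕ} (C : Fin N → Fin N → Fin r) (f : Fin M → Fin N)
    (hf : Function.Injective f) {i : Fin r} {k t : ℕ}
    (h : HasMonoDropped (fun a b => C (f a) (f b)) i k t) : HasMonoDropped C i k t := by
  obtain ⟨S, T, hTS, hS, hT, hcol⟩ := h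
  refine ⟨S.image f, T.image f, Finset.image_subset_image hTS,
    by rw [Finset.card_image_of_injective _ hf, hS],
    by rw [Finset.card_image_of_injective _ hf, hT], ?_⟩
  intro u hu v hv huv hT'
  simp only [Finset.mem_image] at hu hv
  obtain ⟨a, ha, rfl⟩ := hu
  obtain ⟨b, hb, rfl⟩ := hv
  exact hcol a ha b hb (fun h => huv (by rw [h]))
    (fun hh => hT' ⟨Finset.mem_image_of_mem f hh.1, Finset.mem_image_of_mem f hh.2⟩)

lemma chi_exists (r : ℕ) (hr : 0 < r) : ∀ k, ∃ n, ChiProp r k n := by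
  intro k
  induction k with
  | zero => exact ⟨0, fun N _ C _ => ⟨Fin.elim0, fun a => a.elim0, Fin.elim0, fun i => i.elim0⟩⟩
  | succ k ih =>
    obtain ⟨n, hn⟩ := ih
    refine ⟨r * n + 1, fun N hN C hsym => ?_⟩
    have hN1 : 0 < N := by omega
    set v : Fin N := ⟨0, hN1⟩ with hv
    have hcard : (Finset.univ : Finset (Fin r)).card * n ≤ (Finset.univ.erase v).card := by
      rw [Finset.card_erase_of_mem (Finset.mem_univ v), Finset.card_univ, Fintype.card_fin,
        Finset.card_univ, Fintype.card_fin]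
      omega
    obtain ⟨c, -, hc⟩ := Finset.exists_le_card_fiber_of_mul_le_card_of_maps_to
      (f := fun u => C v u) (fun a _ => Finset.mem_univ _) ⟨⟨0, hr⟩, Finset.mem_univ _⟩ hcard
    set A := (Finset.univ.erase v).filter (fun u => C v u = c) with hA
    let f := A.orderEmbOfFin (rfl : A.card = A.card)
    have hfA : ∀ a, f a ∈ A := fun a => A.orderEmbOfFin_mem rfl a
    obtain ⟨e, he, φ, hφ⟩ := hn A.card hc (fun a b => C (f a) (f b)) (fun a b => hsym _ _)
    refine ⟨Fin.cons v (fun i => f (e i)), ?_, Fin.cons c φ, ?_⟩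
    · apply Fin.cons_injective_of_injective
      · rintro ⟨i, hi⟩
        have hm := (Finset.mem_erase.mp (Finset.mem_filter.mp (hfA (e i))).1).1
        exact hm hi
      · exact f.injective.comp he
    · intro i j hij
      obtain ⟨j, rfl⟩ := Fin.eq_succ_of_ne_zero
        (Fin.pos_iff_ne_zero.mp (lt_of_le_of_lt (Fin.zero_le i) hij))
      rcases Fin.eq_zero_or_eq_succ i with rfl | ⟨i, rfl⟩
      · simp only [Fin.cons_zero, Fin.cons_succ]
        exact (Finset.mem_filter.mp (hfA (e j))).2
      · simp only [Fin.cons_succ]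
        exact hφ i j (by exact_mod_cast Fin.succ_lt_succ_iff.mp hij)

lemma ramsey_nonempty (r : ℕ) (hr : 0 < r) (k t : Fin r → ℕ) (htk : ∀ i, t i ≤ k i) :
    {n | ∀ C : Fin n → Fin n → Fin r, (∀ u v, C u v = C v u) →
      ∃ i : Fin r, HasMonoDropped C i (k i) (t i)}.Nonempty := by
  classical
  set M := ∑ i, k i with hM
  obtain ⟨n, hn⟩ := chi_exists r hr (r * M)
  refine ⟨n, fun C hsym => ?_⟩
  obtain ⟨e, he, φ, hφ⟩ := hn n le_rfl C hsym
  have hcard : (Finset.univ : Finset (Fin r)).card * M ≤ (Finset.univ : Finset (Fin (r * M))).card := by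
    simp
  obtain ⟨c, -, hc⟩ := Finset.exists_le_card_fiber_of_mul_le_card_of_maps_to
    (f := φ) (fun a _ => Finset.mem_univ _) ⟨⟨0, hr⟩, Finset.mem_univ _⟩ hcard
  have hkM : k c ≤ M := Finset.single_le_sum (fun i _ => Nat.zero_le _) (Finset.mem_univ c)
  obtain ⟨U, hU, hUcard⟩ := Finset.exists_subset_card_eq (le_trans hkM hc)
  have hScard : (U.image e).card = k c := by
    rw [Finset.card_image_of_injective _ he, hUcard]
  obtain ⟨T, hTS, hTcard⟩ := Finset.exists_subset_card_eq
    (by rw [hScard]; exact htk c : t c ≤ (U.image e).card)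
  refine ⟨c, U.image e, T, hTS, hScard, hTcard, ?_⟩
  intro u hu v hv huv _
  simp only [Finset.mem_image] at hu hv
  obtain ⟨a, ha, rfl⟩ := hu
  obtain ⟨b, hb, rfl⟩ := hv
  have hac : φ a = c := (Finset.mem_filter.mp (hU ha)).2
  have hbc : φ b = c := (Finset.mem_filter.mp (hU hb)).2
  rcases lt_trichotomy a b with h | h | h
  · rw [hφ a b h, hac]
  · exact absurd (by rw [h]) huv
  · rw [hsym, hφ b a h, hbc]

/-- Recursive inequality (Lemma 1): for r ≥ 2 and positive integers k_i ≥ t_i + 1 ≥ 2,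
R([k_1,t_1],…,[k_r,t_r]) ≤ Σ_i R([k_1,t_1],…,[k_i−1,t_i],…,[k_r,t_r]) − (r−2). -/
theorem stmt0 (r : ℕ) (hr : 2 ≤ r) (k t : Fin r → ℕ)
    (ht : ∀ i, 1 ≤ t i) (hk : ∀ i, t i + 1 ≤ k i) :
    RamseyDropped r k t ≤
      (∑ i : Fin r, RamseyDropped r (Function.update k i (k i - 1)) t) - (r - 2) := by
  classical
  have hupd : ∀ i j, t j ≤ Function.update k i (k i - 1) j := by
    intro i j
    rcases eq_or_ne j i with rfl | hne
    · rw [Function.update_self]; have := hk j; omega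
    · rw [Function.update_of_ne hne]; have := hk j; omega
  have main : ∀ (R : Fin r → ℕ),
      (∀ i, ∀ C : Fin (R i) → Fin (R i) → Fin r, (∀ u v, C u v = C v u) →
        ∃ j : Fin r, HasMonoDropped C j (Function.update k i (k i - 1) j) (t j)) →
      RamseyDropped r k t ≤ (∑ i, R i) - (r - 2) := by
    intro R hmem
    have hR1 : ∀ i, 1 ≤ R i := by
      intro i
      by_contra h
      have h0 : R i = 0 := by omega
      have hmem' := hmem i
      rw [h0] at hmem'
      obtain ⟨j, S, _, _, hS, _, _⟩ := hmem' (fun a b => a.elim0) (fun u v => u.elim0)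
      have hSe : S = ∅ := Finset.eq_empty_of_forall_notMem (fun x _ => x.elim0)
      rw [hSe, Finset.card_empty] at hS
      have h1 : 1 ≤ Function.update k i (k i - 1) j := le_trans (ht j) (hupd i j)
      omega
    set SUM := ∑ i, R i with hSUM
    have hSUMr : r ≤ SUM := by
      calc r = ∑ _i : Fin r, 1 := by simp
      _ ≤ SUM := Finset.sum_le_sum (fun i _ => hR1 i)
    set n := SUM - (r - 2) with hn
    apply Nat.sInf_le
    intro C hsym
    have hnpos : 0 < n := by omega
    set v : Fin n := ⟨0, hnpos⟩ with hv
    have hpart : (Finset.univ.erase v).card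
        = ∑ c : Fin r, ((Finset.univ.erase v).filter (fun u => C v u = c)).card :=
      Finset.card_eq_sum_card_fiberwise (fun a _ => Finset.mem_univ _)
    have hec : (Finset.univ.erase v).card = n - 1 := by
      rw [Finset.card_erase_of_mem (Finset.mem_univ v), Finset.card_univ, Fintype.card_fin]
    have hex : ∃ i, R i ≤ ((Finset.univ.erase v).filter (fun u => C v u = i)).card := by
      by_contra hcon
      push_neg at hcon
      have hle : ∑ c : Fin r, ((Finset.univ.erase v).filter (fun u => C v u = c)).card
          ≤ ∑ c : Fin r, (R c - 1) :=
        Finset.sum_le_sum (fun c _ => by have := hcon c; omega)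
      have hsub : ∑ c : Fin r, (R c - 1) + r = SUM := by
        rw [hSUM]
        have : ∀ c : Fin r, R c - 1 + 1 = R c := fun c => Nat.sub_add_cancel (hR1 c)
        calc ∑ c : Fin r, (R c - 1) + r = ∑ c : Fin r, (R c - 1 + 1) := by
              rw [Finset.sum_add_distrib]; simp
        _ = ∑ c : Fin r, R c := by simp [this]
      omega
    obtain ⟨i, hi⟩ := hex
    set A := (Finset.univ.erase v).filter (fun u => C v u = i) with hA
    obtain ⟨B, hBA, hBcard⟩ := Finset.exists_subset_card_eq hi
    let f := B.orderEmbOfFin hBcard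
    have hfB : ∀ a, f a ∈ B := fun a => B.orderEmbOfFin_mem hBcard a
    have hfi : ∀ a, C v (f a) = i := fun a => (Finset.mem_filter.mp (hBA (hfB a))).2
    have hfv : ∀ a, f a ≠ v := fun a =>
      (Finset.mem_erase.mp (Finset.mem_filter.mp (hBA (hfB a))).1).1
    obtain ⟨j, hj⟩ := hmem i (fun a b => C (f a) (f b)) (fun a b => hsym _ _)
    rcases eq_or_ne j i with rfl | hne
    · rw [Function.update_self] at hj
      obtain ⟨S', T', hT'S', hS', hT', hcol⟩ := hj
      refine ⟨j, insert v (S'.image f), T'.image f, ?_, ?_, ?_, ?_⟩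
      · exact (Finset.image_subset_image hT'S').trans (Finset.subset_insert _ _)
      · rw [Finset.card_insert_of_notMem, Finset.card_image_of_injective _ f.injective, hS']
        · have := hk j; omega
        · intro hmem'
          obtain ⟨a, _, ha⟩ := Finset.mem_image.mp hmem'
          exact hfv a ha
      · rw [Finset.card_image_of_injective _ f.injective, hT']
      · intro u hu w hw huw hTc
        rcases Finset.mem_insert.mp hu with rfl | hu' <;>
          rcases Finset.mem_insert.mp hw with h | hw'
        · exact absurd h.symm huw
        · obtain ⟨b, _, rfl⟩ := Finset.mem_image.mp hw'
          exact hfi b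
        · obtain ⟨a, _, rfl⟩ := Finset.mem_image.mp hu'
          rw [h, hsym]; exact hfi a
        · obtain ⟨a, ha, rfl⟩ := Finset.mem_image.mp hu'
          obtain ⟨b, hb, rfl⟩ := Finset.mem_image.mp hw'
          exact hcol a ha b hb (fun h => huw (by rw [h]))
            (fun hh => hTc ⟨Finset.mem_image_of_mem f hh.1, Finset.mem_image_of_mem f hh.2⟩)
    · rw [Function.update_of_ne hne] at hj
      exact ⟨j, mono_map C f f.injective hj⟩
  exact main _ (fun i => Nat.sInf_mem (ramsey_nonempty r (by omega) _ t (hupd i)))
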